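/- Let X be a finite set and F : X × X → X be quasitrivial, anticommutative (F(x,y)=F(y,x) implies x=y), and ≤-preserving for some total ordering ≤ on X. Then F = π₁ (first projection) or F = π₂ (second projection). -/

import Mathlib

def Quasitrivial {X : Type*} (F : X → X → X) : Prop :=
  ∀ x y, F x y = x ∨ F x y = y

lemma key18 {X : Type*} (F : X → X → X) (le : X → X → Prop)
    (hlin : IsLinearOrder X le)
    (hm : ∀ x x' y y' : X, le x x' → le y y' → le (F x y) (F x' y'))
    (hQ : Quasitrivial F)
    (hAC : ∀ x y : X, F x y = F y x → x = y)
    {p q r s : X} (hpq : le p q) (hpq' : p ≠ q) (h1 : F p q = q)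
    (hrs : le r s) (hrs' : r ≠ s) (h2 : F r s = r) : False := by
  have antisymm : ∀ {a b : X}, le a b → le b a → a = b :=
    fun hab hba => hlin.toIsPartialOrder.toAntisymm.antisymm _ _ hab hba
  have total : ∀ a b : X, le a b ∨ le b a := fun a b => hlin.toTotal.total a b
  have refl : ∀ a : X, le a a := fun a => hlin.toIsPartialOrder.toIsPreorder.refl a
  have trans : ∀ {a b c : X}, le a b → le b c → le a c :=
    fun hab hbc => hlin.toIsPartialOrder.toIsPreorder.trans _ _ _ hab hbc
  have anti : ∀ {a b : X}, a ≠ b → F a b = b → F b a = a := by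
    intro a b hne hab
    rcases hQ b a with h | h
    · exact absurd (hAC b a (h.trans hab.symm)) (Ne.symm hne)
    · exact h
  have hqp : F q p = p := anti hpq' h1
  have hsr : F s r = s := by
    rcases hQ s r with h | h
    · exact h
    · exact absurd (hAC r s (h2.trans h.symm)) hrs'
  rcases total q s with hqs | hsq
  · -- q ≤ s
    have hps : F p s = s := by
      rcases hQ p s with h | h
      · have : le q p := by
          have := hm p p q s (refl p) hqs
          rwa [h1, h] at this
        exact absurd (antisymm hpq this) hpq'
      · exact h
    have hps' : p ≠ s := by
      intro e
      subst e
      exact hpq' (antisymm hpq hqs)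
    have hsp : F s p = p := anti hps' hps
    rcases total p r with hpr | hrp
    · have : le s r := by
        have := hm p r s s hpr (refl s)
        rwa [hps, h2] at this
      exact hrs' (antisymm hrs this)
    · have : le s p := by
        have := hm s s r p (refl s) hrp
        rwa [hsr, hsp] at this
      exact hps' (antisymm (trans hpq hqs) this)
  · -- s ≤ q
    have hrq : r ≠ q := by
      intro e
      subst e
      exact hrs' (antisymm hrs hsq)
    rcases hQ r q with h | h
    · have hqr : F q r = q := by
        rcases hQ q r with h' | h'
        · exact h'
        · exact absurd (hAC q r (h'.trans h.symm)) (Ne.symm hrq)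
      rcases total p r with hpr | hrp
      · have : le q r := by
          have := hm p r q q hpr (refl q)
          rwa [h1, h] at this
        exact hrq (antisymm (trans hrs hsq) this)
      · have : le q p := by
          have := hm q q r p (refl q) hrp
          rwa [hqr, hqp] at this
        exact hpq' (antisymm hpq this)
    · have hqr : F q r = r := anti hrq h
      have : le s r := by
        have := hm s q r r hsq (refl r)
        rwa [hsr, hqr] at this
      exact hrs' (antisymm hrs this)

theorem stmt_18 {X : Type*} [Finite X] (F : X → X → X)
    (hQ : Quasitrivial F)
    (hAC : ∀ x y : X, F x y = F y x → x = y)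
    (hOP : ∃ le : X → X → Prop, IsLinearOrder X le ∧
      ∀ x x' y y' : X, le x x' → le y y' → le (F x y) (F x' y')) :
    (∀ x y : X, F x y = x) ∨ (∀ x y : X, F x y = y) := by
  obtain ⟨le, hlin, hm⟩ := hOP
  have total : ∀ a b : X, le a b ∨ le b a := fun a b => hlin.toTotal.total a b
  by_cases h : ∀ x y : X, F x y = x
  · exact Or.inl h
  · right
    push_neg at h
    obtain ⟨p, q, hpq⟩ := h
    have hFpq : F p q = q := (hQ p q).resolve_left hpq
    have hpq' : p ≠ q := by
      intro e; subst e
      exact hpq ((hQ p p).elim id id)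
    -- get an ordered π₂ pair
    have hFqp : F q p = p := by
      rcases hQ q p with h' | h'
      · exact absurd (hAC q p (h'.trans hFpq.symm)) (Ne.symm hpq')
      · exact h'
    obtain ⟨a, b, hab, hab', hFab⟩ :
        ∃ a b : X, le a b ∧ a ≠ b ∧ F a b = b := by
      rcases total p q with h' | h'
      · exact ⟨p, q, h', hpq', hFpq⟩
      · exact ⟨q, p, h', Ne.symm hpq', hFqp⟩
    intro x y
    by_cases hxy : x = y
    · subst hxy; exact (hQ x x).elim id id
    · rcases hQ x y with h' | h'
      · -- F x y = x : π₁ pair, derive contradiction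
        exfalso
        have hFyx : F y x = y := by
          rcases hQ y x with h'' | h''
          · exact h''
          · exact absurd (hAC x y (h'.trans h''.symm)) hxy
        rcases total x y with ho | ho
        · exact key18 F le hlin hm hQ hAC hab hab' hFab ho hxy h'
        · exact key18 F le hlin hm hQ hAC hab hab' hFab ho (Ne.symm hxy) hFyx
      · exact h'
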